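/- Assume μν < λ²m². Every global minimizer of the Mz² model potential, i.e. every z ∈ ℂ⁷ with V(z) = 2μνm² − μ²ν²/λ², satisfies z₄ ≠ 0 and z₅ ≠ 0 (equality in the lower bound forces z₄z₅ = m² − μν/λ² ≠ 0); hence the R-symmetry, under which z₄ and z₅ carry nonzero R-charges, is spontaneously broken at every point of the vacuum space. -/

import Mathlib

open Complex Filter Topology ContinuousLinearMap

set_option maxHeartbeats 1000000

/-- `Mz²` model with `μν < λ²m²`. Every global minimizer of `V`, i.e.
every `z ∈ ℂ⁷` with `V(z) = 2μνm² − μ²ν²/λ²`, satisfies `z₄ ≠ 0` and `z₅ ≠ 0` (equality in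
the lower bound forces `z₄z₅ = m² − μν/λ² ≠ 0`); hence the R-symmetry, under which `z₄` and
`z₅` carry nonzero R-charges, is spontaneously broken at every point of the vacuum space. -/
theorem Mz2_R_broken_on_all_vacua
    (lam mu nu m a b M : ℝ)
    (hlam : 0 < lam) (hmu : 0 < mu) (hnu : 0 < nu) (hm : 0 < m)
    (ha : 0 < a) (hb : 0 < b) (hM : 0 < M)
    (hcond : mu * nu < lam ^ 2 * m ^ 2)
    (W : (Fin 7 → ℂ) → ℂ)
    (hW : ∀ z, W z = (lam : ℂ) * z 0 * (z 3 * z 4 - (m : ℂ) ^ 2) +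
      (mu : ℂ) * z 1 * z 3 + (nu : ℂ) * z 2 * z 4 + (a : ℂ) * (z 4) ^ 2 * z 5 +
      (b : ℂ) * z 3 * z 5 * z 6 + (M : ℂ) * (z 6) ^ 2)
    (V : (Fin 7 → ℂ) → ℝ)
    (hV : ∀ z, V z = ∑ i, ‖fderiv ℂ W z (Pi.single i 1)‖ ^ 2) :
    ∀ z : Fin 7 → ℂ, V z = 2 * mu * nu * m ^ 2 - mu ^ 2 * nu ^ 2 / lam ^ 2 →
      z 3 ≠ 0 ∧ z 4 ≠ 0 ∧
      z 3 * z 4 = ((m ^ 2 - mu * nu / lam ^ 2 : ℝ) : ℂ) ∧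
      ((m ^ 2 - mu * nu / lam ^ 2 : ℝ) : ℂ) ≠ 0 := by
  intro z hz
  -- compute the three relevant partial derivatives
  have P : ∀ i : Fin 7, HasFDerivAt (fun y : Fin 7 → ℂ => y i)
      (ContinuousLinearMap.proj i : (Fin 7 → ℂ) →L[ℂ] ℂ) z := fun i => hasFDerivAt_apply i z
  have P4 : HasFDerivAt (fun y : Fin 7 → ℂ => y 4 ^ 2) ((2 * z 4) • (proj 4 : (Fin 7 → ℂ) →L[ℂ] ℂ)) z := by
    have := ((P 4).mul (P 4)).congr_fderiv (g' := (2 * z 4) • (proj 4 : (Fin 7 → ℂ) →L[ℂ] ℂ)) (by ext v; simp; ring)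
    exact this.congr_of_eventuallyEq (Filter.Eventually.of_forall fun y => by simp [sq])
  have P6 : HasFDerivAt (fun y : Fin 7 → ℂ => y 6 ^ 2) ((2 * z 6) • (proj 6 : (Fin 7 → ℂ) →L[ℂ] ℂ)) z := by
    have := ((P 6).mul (P 6)).congr_fderiv (g' := (2 * z 6) • (proj 6 : (Fin 7 → ℂ) →L[ℂ] ℂ)) (by ext v; simp; ring)
    exact this.congr_of_eventuallyEq (Filter.Eventually.of_forall fun y => by simp [sq])
  have h1 := (((P 0).const_mul (lam:ℂ)).mul (((P 3).mul (P 4)).sub_const ((m:ℂ)^2)))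
  have h2 := ((P 1).const_mul (mu:ℂ)).mul (P 3)
  have h3 := ((P 2).const_mul (nu:ℂ)).mul (P 4)
  have h4 := (P4.const_mul (a:ℂ)).mul (P 5)
  have h5 := (((P 3).const_mul (b:ℂ)).mul (P 5)).mul (P 6)
  have h6 := P6.const_mul (M:ℂ)
  have hD0 := ((((h1.add h2).add h3).add h4).add h5).add h6
  have hWf : W = fun z : Fin 7 → ℂ => (lam : ℂ) * z 0 * (z 3 * z 4 - (m : ℂ) ^ 2) +
      (mu : ℂ) * z 1 * z 3 + (nu : ℂ) * z 2 * z 4 + (a : ℂ) * (z 4) ^ 2 * z 5 +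
      (b : ℂ) * z 3 * z 5 * z 6 + (M : ℂ) * (z 6) ^ 2 := funext hW
  have hD : HasFDerivAt W _ z := hD0.congr_of_eventuallyEq
    (Filter.Eventually.of_forall fun y => by rw [hW]; simp only [Pi.mul_apply, Pi.add_apply])
  have e0 : fderiv ℂ W z (Pi.single 0 1) = (lam : ℂ) * (z 3 * z 4 - (m:ℂ)^2) := by
    rw [hD.fderiv]; simp [Pi.single_apply]; ring
  have e1 : fderiv ℂ W z (Pi.single 1 1) = (mu : ℂ) * z 3 := by
    rw [hD.fderiv]; simp [Pi.single_apply]; ring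
  have e2 : fderiv ℂ W z (Pi.single 2 1) = (nu : ℂ) * z 4 := by
    rw [hD.fderiv]; simp [Pi.single_apply]; ring
  -- the value of V
  rw [hV z, Fin.sum_univ_seven, e0, e1, e2] at hz
  -- names
  set w : ℂ := z 3 * z 4 with hwdef
  set p : ℝ := ‖z 3‖ with hp
  set q : ℝ := ‖z 4‖ with hq
  set r : ℝ := w.re with hr
  set s : ℝ := w.im with hs
  set t : ℝ := ‖w‖ with ht
  have hpq : t = p * q := by rw [ht, hwdef, hp, hq, norm_mul]
  have ht0 : 0 ≤ t := norm_nonneg w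
  have hrt : r ≤ t := Complex.re_le_norm w
  have habs : ∀ u : ℂ, ‖u‖ ^ 2 = u.re ^ 2 + u.im ^ 2 := fun u => by
    rw [Complex.sq_norm, Complex.normSq_apply]; ring
  have hcoe : ∀ x : ℝ, ‖(x : ℂ)‖ = |x| := fun x => by
    rw [Complex.norm_real, Real.norm_eq_abs]
  have ht2 : t ^ 2 = r ^ 2 + s ^ 2 := by rw [ht, habs]
  have hE0 : ‖(lam : ℂ) * (w - (m:ℂ)^2)‖ ^ 2 = lam ^ 2 * ((r - m ^ 2) ^ 2 + s ^ 2) := by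
    rw [norm_mul, mul_pow, hcoe, abs_of_pos hlam, habs]
    have h1 : (w - (m:ℂ)^2).re = r - m ^ 2 := by
      simp [Complex.sub_re, ← Complex.ofReal_pow, hr]
    have h2 : (w - (m:ℂ)^2).im = s := by
      simp [Complex.sub_im, ← Complex.ofReal_pow, hs]
    rw [h1, h2]
  have hE1 : ‖(mu : ℂ) * z 3‖ ^ 2 = mu ^ 2 * p ^ 2 := by
    rw [norm_mul, mul_pow, hcoe, abs_of_pos hmu]
  have hE2 : ‖(nu : ℂ) * z 4‖ ^ 2 = nu ^ 2 * q ^ 2 := by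
    rw [norm_mul, mul_pow, hcoe, abs_of_pos hnu]
  rw [hE0, hE1, hE2] at hz
  -- the remaining four terms are nonnegative
  set R : ℝ := ‖fderiv ℂ W z (Pi.single 3 1)‖ ^ 2 + ‖fderiv ℂ W z (Pi.single 4 1)‖ ^ 2 +
      ‖fderiv ℂ W z (Pi.single 5 1)‖ ^ 2 + ‖fderiv ℂ W z (Pi.single 6 1)‖ ^ 2 with hRdef
  have hR : 0 ≤ R := by positivity
  have hzR : lam ^ 2 * ((r - m ^ 2) ^ 2 + s ^ 2) + mu ^ 2 * p ^ 2 + nu ^ 2 * q ^ 2 + R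
      = 2 * mu * nu * m ^ 2 - mu ^ 2 * nu ^ 2 / lam ^ 2 := by
    rw [hRdef]; linarith only [hz]
  -- c := mu*nu/lam^2
  set c : ℝ := mu * nu / lam ^ 2 with hcdef
  have hlam2 : (0:ℝ) < lam ^ 2 := by positivity
  have hc : lam ^ 2 * c = mu * nu := by rw [hcdef]; field_simp
  have hc0 : 0 < c := by positivity
  have hcm : c < m ^ 2 := by
    rw [hcdef, div_lt_iff₀ hlam2]
    exact hcond.trans_le (le_of_eq (mul_comm _ _))
  have hc2 : mu ^ 2 * nu ^ 2 / lam ^ 2 = mu * nu * c := by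
    rw [hcdef]; field_simp
  rw [hc2] at hzR
  have hAM : 2 * (mu * nu) * t ≤ mu ^ 2 * p ^ 2 + nu ^ 2 * q ^ 2 := by
    rw [hpq]
    nlinarith only [sq_nonneg (mu * p - nu * q)]
  -- conclude t = m^2 - c
  have hmono : lam ^ 2 * 2 * m ^ 2 * t ≤ lam ^ 2 * 2 * m ^ 2 * r + lam ^ 2 * ((r - m ^ 2) ^ 2 + s ^ 2) - lam ^ 2 * (t - m ^ 2) ^ 2 := by
    have hid : lam ^ 2 * ((r - m ^ 2) ^ 2 + s ^ 2) - lam ^ 2 * (t - m ^ 2) ^ 2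
        = lam ^ 2 * 2 * m ^ 2 * (t - r) := by linear_combination (-(lam ^ 2)) * ht2
    linarith only [hid]
  have hpos2m : (0:ℝ) ≤ lam ^ 2 * 2 * m ^ 2 * (t - r) :=
    mul_nonneg (by positivity) (sub_nonneg.2 hrt)
  have hstep : lam ^ 2 * (t - m ^ 2) ^ 2 ≤ lam ^ 2 * ((r - m ^ 2) ^ 2 + s ^ 2) := by
    have hid : lam ^ 2 * ((r - m ^ 2) ^ 2 + s ^ 2) - lam ^ 2 * (t - m ^ 2) ^ 2
        = lam ^ 2 * 2 * m ^ 2 * (t - r) := by linear_combination (-(lam ^ 2)) * ht2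
    linarith only [hid, hpos2m]
  have hup : lam ^ 2 * (t - m ^ 2) ^ 2 + 2 * (mu * nu) * t ≤ 2 * mu * nu * m ^ 2 - mu * nu * c := by
    linarith only [hstep, hzR, hAM, hR]
  have hkey : lam ^ 2 * (t - (m ^ 2 - c)) ^ 2 ≤ 0 := by
    have hid2 : lam ^ 2 * (t - (m ^ 2 - c)) ^ 2
        = lam ^ 2 * (t - m ^ 2) ^ 2 + 2 * (mu * nu) * t - (2 * mu * nu * m ^ 2 - mu * nu * c) := by
      linear_combination (2 * (t - m ^ 2) + c) * hc
    linarith only [hid2, hup]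
  have htval : t = m ^ 2 - c := by
    have := le_antisymm hkey (by positivity)
    have h2 : (t - (m ^ 2 - c)) ^ 2 = 0 := by
      rcases mul_eq_zero.1 this with h | h
      · exact absurd h (ne_of_gt hlam2)
      · exact h
    have := (pow_eq_zero_iff two_ne_zero).mp h2
    linarith only [this]
  have hrval : r = t := by
    have hz2 : lam ^ 2 * (t - (m ^ 2 - c)) ^ 2 = 0 := by rw [htval]; ring
    have hge : lam ^ 2 * 2 * m ^ 2 * t ≤ lam ^ 2 * 2 * m ^ 2 * r := by
      have hid2 : lam ^ 2 * (t - (m ^ 2 - c)) ^ 2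
          = lam ^ 2 * (t - m ^ 2) ^ 2 + 2 * (mu * nu) * t - (2 * mu * nu * m ^ 2 - mu * nu * c) := by
        linear_combination (2 * (t - m ^ 2) + c) * hc
      linarith only [hid2, hz2, hzR, hAM, hR, hmono]
    have hpos : (0:ℝ) < lam ^ 2 * 2 * m ^ 2 := by positivity
    exact le_antisymm hrt ((mul_le_mul_iff_of_pos_left hpos).mp hge)
  have hsval : s = 0 := by
    have : s ^ 2 = 0 := by
      rw [← hrval] at ht2; linarith only [ht2]
    exact pow_eq_zero_iff (two_ne_zero) |>.mp this
  have hwval : w = ((m ^ 2 - mu * nu / lam ^ 2 : ℝ) : ℂ) := by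
    have h1 : w.re = m ^ 2 - mu * nu / lam ^ 2 := by
      rw [← hr, hrval, htval, hcdef]
    have h2 : w.im = 0 := by rw [← hs, hsval]
    apply Complex.ext
    · rw [h1, Complex.ofReal_re]
    · rw [h2, Complex.ofReal_im]
  have hne : ((m ^ 2 - mu * nu / lam ^ 2 : ℝ) : ℂ) ≠ 0 := by
    simp only [ne_eq, Complex.ofReal_eq_zero]
    rw [← hcdef]; intro h; linarith only [h, hcm]
  have hw0 : w ≠ 0 := hwval ▸ hne
  exact ⟨fun h => hw0 (by rw [hwdef, h, zero_mul]),
    fun h => hw0 (by rw [hwdef, h, mul_zero]),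
    hwval, hne⟩
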